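/- arXiv:2301.06095 — 3 statements merged into one kernel-verified Lean document; each statement's English description precedes it below -/
import Mathlib

section
/- The infinite product defining the singular series 𝔖(H) = ∏_p (1 - ν_H(p)/p)/(1-1/p)^k converges: for all primes p not dividing any difference of two elements of H, ν_H(p) = k, and the factor equals (1 - k/p)/(1-1/p)^k = 1 + O_k(1/p^2), so the product over all primes converges absolutely. -/
open scoped BigOperators

/-- Number of distinct residue classes mod `p` occupied by elements of `H`. -/
noncomputable def nuH (H : Finset ℤ) (p : ℕ) : ℕ :=
  (H.image (fun n => (Int.cast n : ZMod p))).card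

lemma aux_sub_bound (k : ℕ) {x : ℝ} (h0 : 0 ≤ x) (h1 : x ≤ 1) :
    |(1 - (k : ℝ) * x) - (1 - x) ^ k| ≤ 2 ^ k * x ^ 2 := by
  induction k with
  | zero => simp; positivity
  | succ k ih =>
    have hpow_le : (1 - x) ^ k ≤ 1 := pow_le_one₀ (by linarith) (by linarith)
    have hbern : 1 - (k : ℝ) * x ≤ (1 - x) ^ k := by
      have h := one_add_mul_le_pow (show (-2:ℝ) ≤ -x by linarith) k
      have e1 : (1 : ℝ) + (k : ℝ) * (-x) = 1 - (k : ℝ) * x := by ring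
      have e2 : (1 : ℝ) + (-x) = 1 - x := by ring
      rw [e1, e2] at h
      exact h
    have key : (1 - ((k+1 : ℕ) : ℝ) * x) - (1 - x) ^ (k+1)
        = ((1 - (k : ℝ) * x) - (1 - x) ^ k) - x * (1 - (1 - x) ^ k) := by
      push_cast
      ring
    rw [key]
    have h2 : |x * (1 - (1 - x) ^ k)| ≤ (k : ℝ) * x ^ 2 := by
      rw [abs_mul, abs_of_nonneg h0, abs_of_nonneg (by linarith)]
      calc x * (1 - (1 - x) ^ k) ≤ x * ((k : ℝ) * x) := by
            apply mul_le_mul_of_nonneg_left _ h0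
            linarith
        _ = (k : ℝ) * x ^ 2 := by ring
    have hk2 : (k : ℝ) ≤ 2 ^ k := by
      exact_mod_cast (Nat.lt_two_pow_self (n := k)).le
    calc |((1 - (k : ℝ) * x) - (1 - x) ^ k) - x * (1 - (1 - x) ^ k)|
        ≤ |(1 - (k : ℝ) * x) - (1 - x) ^ k| + |x * (1 - (1 - x) ^ k)| := abs_sub _ _
      _ ≤ 2 ^ k * x ^ 2 + (k : ℝ) * x ^ 2 := add_le_add ih h2
      _ ≤ 2 ^ (k+1) * x ^ 2 := by
          have h4 := mul_le_mul_of_nonneg_right hk2 (sq_nonneg x)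
          have h3 : (2:ℝ) ^ (k+1) * x ^ 2 = 2 ^ k * x ^ 2 + 2 ^ k * x ^ 2 := by ring
          linarith

lemma abs_log_le_two_mul {x : ℝ} (hx : 1/2 ≤ x) : |Real.log x| ≤ 2 * |x - 1| := by
  have hx0 : 0 < x := by linarith
  rcases le_or_gt 1 x with h | h
  · rw [abs_of_nonneg (Real.log_nonneg h), abs_of_nonneg (by linarith)]
    have := Real.log_le_sub_one_of_pos hx0
    linarith
  · rw [abs_of_nonpos (Real.log_nonpos hx0.le h.le), abs_of_neg (by linarith)]
    have h1 : Real.log x⁻¹ ≤ x⁻¹ - 1 := Real.log_le_sub_one_of_pos (by positivity)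
    rw [Real.log_inv] at h1
    have hmul : x * x⁻¹ = 1 := mul_inv_cancel₀ hx0.ne'
    nlinarith [h1, hmul]

lemma factor_bound (k : ℕ) {p : ℝ} (hp : 2 ≤ p) :
    |(1 - (k:ℝ) / p) / (1 - 1 / p) ^ k - 1| ≤ 4 ^ k / p ^ 2 := by
  have hp0 : 0 < p := by linarith
  have hx0 : 0 < 1 / p := by positivity
  have hx2 : 1 / p ≤ 1/2 := by
    rw [div_le_div_iff₀ hp0 two_pos]; linarith
  have hD0 : (0:ℝ) < (1 - 1/p) ^ k := pow_pos (by linarith) k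
  have hDlb : ((2:ℝ)⁻¹) ^ k ≤ (1 - 1/p) ^ k :=
    pow_le_pow_left₀ (by norm_num) (by linarith) k
  have hnum : |(1 - (k:ℝ) * (1/p)) - (1 - 1/p) ^ k| ≤ 2 ^ k * (1/p) ^ 2 :=
    aux_sub_bound k hx0.le (by linarith)
  have hkp : (k:ℝ)/p = (k:ℝ) * (1/p) := by ring
  rw [hkp, div_sub_one hD0.ne', abs_div, abs_of_pos hD0, div_le_iff₀ hD0]
  calc |(1 - (k:ℝ) * (1/p)) - (1 - 1/p) ^ k| ≤ 2 ^ k * (1/p) ^ 2 := hnum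
    _ = 4 ^ k / p ^ 2 * ((2:ℝ)⁻¹) ^ k := by
        rw [div_pow, one_pow]
        rw [div_mul_eq_mul_div, ← mul_pow]
        norm_num [div_eq_mul_inv]
    _ ≤ 4 ^ k / p ^ 2 * (1 - 1/p) ^ k := by
        apply mul_le_mul_of_nonneg_left hDlb (by positivity)

theorem stmt_1 (k : ℕ) :
    ∃ C : ℝ, ∀ H : Finset ℤ, H.card = k →
      (∀ p : Nat.Primes,
          (∀ a ∈ H, ∀ b ∈ H, a ≠ b → ¬ ((p : ℤ) ∣ (a - b))) → nuH H (p : ℕ) = k) ∧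
      (∀ p : Nat.Primes, nuH H (p : ℕ) = k →
          |(1 - (k : ℝ) / p) / (1 - 1 / (p : ℝ)) ^ k - 1| ≤ C / (p : ℝ) ^ 2) ∧
      Multipliable (fun p : Nat.Primes =>
          (1 - (nuH H (p : ℕ) : ℝ) / p) / (1 - 1 / (p : ℝ)) ^ k) := by
  refine ⟨4 ^ k, fun H hH => ?_⟩
  have hp2 : ∀ p : Nat.Primes, (2:ℝ) ≤ ((p:ℕ):ℝ) := by
    intro p; exact_mod_cast p.2.two_le
  have part1 : ∀ p : Nat.Primes,
      (∀ a ∈ H, ∀ b ∈ H, a ≠ b → ¬ ((p : ℤ) ∣ (a - b))) → nuH H (p : ℕ) = k := by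
    intro p hp
    rw [nuH, Finset.card_image_of_injOn, hH]
    intro a ha b hb hab
    by_contra hne
    apply hp a ha b hb hne
    have h' : (a : ZMod (p:ℕ)) = (b : ZMod (p:ℕ)) := hab
    rw [ZMod.intCast_eq_intCast_iff] at h'
    exact dvd_sub_comm.mp h'.dvd
  refine ⟨part1, fun p _ => factor_bound k (hp2 p), ?_⟩
  -- Multipliability
  set f : Nat.Primes → ℝ :=
    fun p => (1 - (nuH H (p : ℕ) : ℝ) / p) / (1 - 1 / (p : ℝ)) ^ k with hfdef
  show Multipliable f
  by_cases hzero : ∃ p₀, f p₀ = 0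
  · obtain ⟨p₀, hp₀⟩ := hzero
    refine ⟨0, ?_⟩
    rw [HasProd]
    refine Filter.Tendsto.congr' ?_ tendsto_const_nhds
    filter_upwards [Filter.eventually_ge_atTop ({p₀} : Finset Nat.Primes)] with s hs
    exact (Finset.prod_eq_zero (hs (Finset.mem_singleton_self p₀)) hp₀).symm
  · push_neg at hzero
    have hD0 : ∀ p : Nat.Primes, (0:ℝ) < (1 - 1 / ((p:ℕ):ℝ)) ^ k := by
      intro p
      have := hp2 p
      apply pow_pos
      have : 1 / ((p:ℕ):ℝ) ≤ 1/2 := by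
        rw [div_le_div_iff₀ (by linarith) two_pos]; linarith
      linarith
    have hpos : ∀ p : Nat.Primes, 0 < f p := by
      intro p
      haveI : Fact (p:ℕ).Prime := ⟨p.2⟩
      have hν : (nuH H (p:ℕ) : ℝ) ≤ ((p:ℕ):ℝ) := by
        have : nuH H (p:ℕ) ≤ (p:ℕ) := by
          rw [nuH]
          calc (H.image (fun n => (Int.cast n : ZMod (p:ℕ)))).card
              ≤ Fintype.card (ZMod (p:ℕ)) := Finset.card_le_univ _
            _ = (p:ℕ) := ZMod.card _
        exact_mod_cast this
      have hnum : 0 ≤ 1 - (nuH H (p:ℕ):ℝ) / ((p:ℕ):ℝ) := by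
        rw [sub_nonneg, div_le_one (by linarith [hp2 p])]
        exact hν
      rcases hnum.lt_or_eq with h | h
      · exact div_pos h (hD0 p)
      · exfalso
        apply hzero p
        rw [hfdef]
        simp only [← h, zero_div]
    have hlog : Summable fun p : Nat.Primes => Real.log (f p) := by
      have hg : Summable fun p : Nat.Primes => 1 / ((p:ℕ):ℝ) ^ 2 :=
        (Real.summable_one_div_nat_pow.mpr one_lt_two).comp_injective
          Nat.Primes.coe_nat_injective
      refine summable_of_isBigO' hg ?_
      rw [Asymptotics.isBigO_iff]
      refine ⟨2 * 4 ^ k, ?_⟩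
      have hfin : {p : Nat.Primes |
          ¬ (nuH H (p:ℕ) = k ∧ 2 * (4:ℝ) ^ k ≤ ((p:ℕ):ℝ) ^ 2)}.Finite := by
        set N : ℤ := ∏ a ∈ H, ∏ b ∈ H, (if a = b then 1 else a - b) with hN
        have hN0 : N ≠ 0 := by
          rw [hN, Finset.prod_ne_zero_iff]
          intro a _
          rw [Finset.prod_ne_zero_iff]
          intro b _
          split_ifs with h
          · exact one_ne_zero
          · exact sub_ne_zero.mpr h
        have key : {p : Nat.Primes |
            ¬ (nuH H (p:ℕ) = k ∧ 2 * (4:ℝ) ^ k ≤ ((p:ℕ):ℝ) ^ 2)} ⊆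
            (fun p : Nat.Primes => (p:ℕ)) ⁻¹' (Set.Iic (max N.natAbs (2 * 4 ^ k))) := by
          intro p hp
          simp only [Set.mem_setOf_eq, not_and_or, not_le] at hp
          simp only [Set.mem_preimage, Set.mem_Iic]
          rcases hp with hp | hp
          · refine le_max_of_le_left ?_
            have hex : ¬ ∀ a ∈ H, ∀ b ∈ H, a ≠ b → ¬ ((p : ℤ) ∣ (a - b)) :=
              fun h => hp (part1 p h)
            push_neg at hex
            obtain ⟨a, ha, b, hb, hab, hdvd⟩ := hex
            have hdN : (p:ℤ) ∣ N := by
              refine hdvd.trans ?_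
              have h1 : (if a = b then (1:ℤ) else a - b) ∣
                  ∏ b' ∈ H, (if a = b' then 1 else a - b') :=
                Finset.dvd_prod_of_mem _ hb
              rw [if_neg hab] at h1
              exact h1.trans (Finset.dvd_prod_of_mem _ ha)
            have : (p:ℕ) ∣ N.natAbs := by
              have := Int.natAbs_dvd_natAbs.mpr hdN
              simpa using this
            exact Nat.le_of_dvd (Int.natAbs_pos.mpr hN0) this
          · refine le_max_of_le_right ?_
            have h1 : ((p:ℕ):ℝ) ≤ ((p:ℕ):ℝ) ^ 2 := by
              nlinarith [hp2 p]
            have h2 : ((p:ℕ):ℝ) < 2 * 4 ^ k := lt_of_le_of_lt h1 hp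
            have : ((p:ℕ):ℝ) < ((2 * 4 ^ k : ℕ):ℝ) := by push_cast; exact h2
            exact_mod_cast this.le
        exact Set.Finite.subset
          ((Set.finite_Iic _).preimage (Nat.Primes.coe_nat_injective.injOn)) key
      filter_upwards [Filter.eventually_cofinite.mpr hfin] with p hp
      obtain ⟨hν, hplarge⟩ := hp
      have hfp : f p = (1 - (k : ℝ) / ((p:ℕ):ℝ)) / (1 - 1 / ((p:ℕ):ℝ)) ^ k := by
        simp only [hfdef, hν]
      have hb : |f p - 1| ≤ 4 ^ k / ((p:ℕ):ℝ) ^ 2 := by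
        rw [hfp]; exact factor_bound k (hp2 p)
      have hpp : (0:ℝ) < ((p:ℕ):ℝ) ^ 2 := pow_pos (by linarith [hp2 p]) 2
      have hhalf : 4 ^ k / ((p:ℕ):ℝ) ^ 2 ≤ 1/2 := by
        rw [div_le_div_iff₀ hpp two_pos]
        linarith
      have hfhalf : 1/2 ≤ f p := by
        have := abs_le.mp hb
        linarith [hhalf]
      calc ‖Real.log (f p)‖ = |Real.log (f p)| := rfl
        _ ≤ 2 * |f p - 1| := abs_log_le_two_mul hfhalf
        _ ≤ 2 * (4 ^ k / ((p:ℕ):ℝ) ^ 2) := by linarith [hb]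
        _ = 2 * 4 ^ k * (1 / ((p:ℕ):ℝ) ^ 2) := by ring
        _ ≤ 2 * 4 ^ k * ‖1 / ((p:ℕ):ℝ) ^ 2‖ := by
            rw [Real.norm_eq_abs, abs_of_nonneg (by positivity)]
    exact Real.multipliable_of_summable_log hpos hlog
end

section
/- For a squarefree integer q and nonzero integer m, the sum over divisors d of q of μ(d)²/φ(d)² times the Ramanujan sum c_d(m) equals ∏_{p | q, p | m} (1 + 1/(p-1)) · ∏_{p | q, p ∤ m} (1 - 1/(p-1)²). -/
open scoped BigOperators Real

/-- `e(x) = exp(2πix)`. -/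
noncomputable def e (x : ℝ) : ℂ := Complex.exp (2 * π * Complex.I * x)

/-- The Ramanujan sum `c_d(m) = Σ_{1 ≤ a ≤ d, (a,d)=1} e(ma/d)`. -/
noncomputable def ramanujanSum (d : ℕ) (m : ℤ) : ℂ :=
  ∑ a ∈ (Finset.Icc 1 d).filter (fun a => Nat.Coprime a d), e ((m : ℝ) * a / d)

open ArithmeticFunction
open scoped ArithmeticFunction.Moebius

lemma e_int (n : ℤ) : e n = 1 := by
  unfold e
  rw [show ((2:ℂ) * π * Complex.I * ((n:ℝ):ℂ)) = (n:ℤ) * (2 * π * Complex.I) by push_cast; ring]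
  exact Complex.exp_int_mul_two_pi_mul_I n

lemma two_pi_I_ne : (2 * (π:ℂ) * Complex.I) ≠ 0 := by
  simp [Real.pi_ne_zero, Complex.I_ne_zero, Complex.ofReal_ne_zero]

lemma sum_range_e (d : ℕ) (hd : 0 < d) (m : ℤ) :
    ∑ a ∈ Finset.range d, e ((m : ℝ) * a / d) = if (d:ℤ) ∣ m then (d:ℂ) else 0 := by
  have hd0 : (d:ℂ) ≠ 0 := Nat.cast_ne_zero.mpr hd.ne'
  have hterm : ∀ a : ℕ, e ((m : ℝ) * a / d) = (Complex.exp (2 * π * Complex.I * m / d)) ^ a := by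
    intro a
    unfold e
    rw [← Complex.exp_nat_mul]
    congr 1
    push_cast
    field_simp
  simp_rw [hterm]
  set Z := Complex.exp (2 * π * Complex.I * m / d) with hZ
  have hZd : Z ^ d = 1 := by
    rw [hZ, ← Complex.exp_nat_mul]
    rw [show ((d:ℂ) * (2 * π * Complex.I * m / d)) = (m:ℤ) * (2 * π * Complex.I) by
      field_simp]
    exact Complex.exp_int_mul_two_pi_mul_I m
  have hZ1 : Z = 1 ↔ (d:ℤ) ∣ m := by
    rw [hZ, Complex.exp_eq_one_iff]
    constructor
    · rintro ⟨n, hn⟩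
      refine ⟨n, ?_⟩
      have hmc : (m:ℂ) = n * d := by
        field_simp at hn
        have h3 : (2 * (π:ℂ) * Complex.I) * (m:ℂ) = (2 * (π:ℂ) * Complex.I) * (n * d) := by
          linear_combination (2 * (π:ℂ) * Complex.I) * hn
        exact mul_left_cancel₀ two_pi_I_ne h3
      rw [mul_comm]; exact_mod_cast hmc
    · rintro ⟨n, rfl⟩
      exact ⟨n, by push_cast; field_simp⟩
  by_cases h : (d:ℤ) ∣ m
  · rw [if_pos h]
    simp [hZ1.mpr h]
  · rw [if_neg h]
    have hne : Z ≠ 1 := fun h1 => h (hZ1.mp h1)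
    rw [geom_sum_eq hne, hZd]
    simp

lemma ramanujanSum_eq_range (d : ℕ) (hd : 0 < d) (m : ℤ) :
    ramanujanSum d m = ∑ a ∈ (Finset.range d).filter (fun a => Nat.Coprime a d),
      e ((m : ℝ) * a / d) := by
  rcases eq_or_lt_of_le (show 1 ≤ d from hd) with h1 | h2
  · -- d = 1
    subst_vars
    unfold ramanujanSum
    rw [show ((Finset.Icc 1 1).filter (fun a => Nat.Coprime a 1)) = {1} from by decide,
        show ((Finset.range 1).filter (fun a => Nat.Coprime a 1)) = {0} from by decide]
    simp only [Finset.sum_singleton]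
    rw [show ((m:ℝ) * ((1:ℕ):ℝ) / ((1:ℕ):ℝ)) = ((m:ℤ):ℝ) by push_cast; ring,
        show ((m:ℝ) * ((0:ℕ):ℝ) / ((1:ℕ):ℝ)) = ((0:ℤ):ℝ) by push_cast; ring,
        e_int, e_int]
  · -- d ≥ 2
    unfold ramanujanSum
    apply Finset.sum_congr _ (fun _ _ => rfl)
    ext a
    simp only [Finset.mem_filter, Finset.mem_Icc, Finset.mem_range]
    constructor
    · rintro ⟨⟨h1, hle⟩, hcop⟩
      refine ⟨lt_of_le_of_ne hle ?_, hcop⟩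
      rintro rfl
      have := hcop
      rw [Nat.Coprime, Nat.gcd_self] at this
      omega
    · rintro ⟨hlt, hcop⟩
      refine ⟨⟨?_, hlt.le⟩, hcop⟩
      rcases Nat.eq_zero_or_pos a with rfl | h; swap; · omega
      exact absurd ((Nat.coprime_zero_left d).mp hcop) (by omega)

lemma sum_divisors_ramanujanSum (d : ℕ) (hd : 0 < d) (m : ℤ) :
    ∑ k ∈ d.divisors, ramanujanSum k m = ∑ a ∈ Finset.range d, e ((m : ℝ) * a / d) := by
  have key : ∀ g ∈ d.divisors,
      ∑ a ∈ (Finset.range d).filter (fun a => Nat.gcd d a = g), e ((m : ℝ) * a / d)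
        = ramanujanSum (d / g) m := by
    intro g hg
    obtain ⟨hgd, hd0⟩ := Nat.mem_divisors.mp hg
    have hg0 : 0 < g := Nat.pos_of_dvd_of_pos hgd hd
    obtain ⟨k, rfl⟩ := hgd
    have hk0 : 0 < k := Nat.pos_of_ne_zero fun h => by simp [h] at hd
    rw [Nat.mul_div_cancel_left k hg0]
    rw [ramanujanSum_eq_range k hk0 m]
    apply Finset.sum_nbij' (fun a => a / g) (fun b => g * b)
    · intro a ha
      simp only [Finset.mem_filter, Finset.mem_range] at ha ⊢
      obtain ⟨hlt, hgcd⟩ := ha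
      have hga : g ∣ a := hgcd ▸ Nat.gcd_dvd_right _ _
      obtain ⟨b, rfl⟩ := hga
      rw [Nat.mul_div_cancel_left b hg0]
      constructor
      · exact lt_of_mul_lt_mul_left hlt (Nat.zero_le g)
      · have := hgcd
        rw [Nat.gcd_mul_left, Nat.mul_eq_left hg0.ne'] at this
        exact Nat.Coprime.symm this
    · intro b hb
      simp only [Finset.mem_filter, Finset.mem_range] at hb ⊢
      obtain ⟨hlt, hcop⟩ := hb
      exact ⟨Nat.mul_lt_mul_left hg0 |>.mpr hlt, by rw [Nat.gcd_mul_left,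
        Nat.Coprime.gcd_eq_one hcop.symm, mul_one]⟩
    · intro a ha
      simp only [Finset.mem_filter, Finset.mem_range] at ha
      have hga : g ∣ a := ha.2 ▸ Nat.gcd_dvd_right _ _
      exact Nat.mul_div_cancel' hga
    · intro b hb
      exact Nat.mul_div_cancel_left b hg0
    · intro a ha
      simp only [Finset.mem_filter, Finset.mem_range] at ha
      have hga : g ∣ a := ha.2 ▸ Nat.gcd_dvd_right _ _
      obtain ⟨b, rfl⟩ := hga
      rw [Nat.mul_div_cancel_left b hg0]
      congr 1
      have hgr : (g:ℝ) ≠ 0 := Nat.cast_ne_zero.mpr hg0.ne'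
      have hkr : (k:ℝ) ≠ 0 := Nat.cast_ne_zero.mpr hk0.ne'
      push_cast
      field_simp
  calc ∑ k ∈ d.divisors, ramanujanSum k m
      = ∑ g ∈ d.divisors, ramanujanSum (d / g) m := (Nat.sum_div_divisors d _).symm
    _ = ∑ g ∈ d.divisors, ∑ a ∈ (Finset.range d).filter (fun a => Nat.gcd d a = g),
          e ((m : ℝ) * a / d) := (Finset.sum_congr rfl key).symm
    _ = ∑ a ∈ Finset.range d, e ((m : ℝ) * a / d) := by
        apply Finset.sum_fiberwise_of_maps_to
        intro a _
        exact Nat.mem_divisors.mpr ⟨Nat.gcd_dvd_left _ _, hd.ne'⟩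

lemma sum_divisors_ramanujanSum' (d : ℕ) (hd : 0 < d) (m : ℤ) :
    ∑ k ∈ d.divisors, ramanujanSum k m = if (d:ℤ) ∣ m then (d:ℂ) else 0 := by
  rw [sum_divisors_ramanujanSum d hd m, sum_range_e d hd m]

noncomputable def Hfun (m : ℤ) : ArithmeticFunction ℂ :=
  ⟨fun d => if (d:ℤ) ∣ m then (d:ℂ) else 0, by simp⟩

lemma Hfun_apply (m : ℤ) (d : ℕ) : Hfun m d = if (d:ℤ) ∣ m then (d:ℂ) else 0 := rfl

lemma Hfun_mult (m : ℤ) : (Hfun m).IsMultiplicative := by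
  constructor
  · simp [Hfun_apply]
  · intro a b hab
    simp only [Hfun_apply]
    by_cases ha : (a:ℤ) ∣ m <;> by_cases hb : (b:ℤ) ∣ m
    · rw [if_pos ha, if_pos hb, if_pos (by
        exact_mod_cast (Nat.isCoprime_iff_coprime.mpr hab).mul_dvd ha hb)]
      push_cast; ring
    · rw [if_pos ha, if_neg hb,
        if_neg (fun h => hb (dvd_trans (by exact_mod_cast Dvd.intro_left a rfl) h)), mul_zero]
    · rw [if_neg ha,
        if_neg (fun h => ha (dvd_trans (by exact_mod_cast Dvd.intro b rfl) h)), zero_mul]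
    · rw [if_neg ha,
        if_neg (fun h => ha (dvd_trans (by exact_mod_cast Dvd.intro b rfl) h)), zero_mul]

lemma ramanujan_eq_mul (m : ℤ) : ∀ d, 0 < d →
    ramanujanSum d m = (((μ : ArithmeticFunction ℤ) : ArithmeticFunction ℂ) * Hfun m) d := by
  have key := (sum_eq_iff_sum_mul_moebius_eq (R := ℂ)
    (f := fun d => ramanujanSum d m)
    (g := fun d => if (d:ℤ) ∣ m then (d:ℂ) else 0)).mp
    (fun n hn => sum_divisors_ramanujanSum' n hn m)
  intro d hd
  rw [mul_apply]
  rw [← key d hd]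
  apply Finset.sum_congr rfl
  intro x hx
  rw [intCoe_apply, Hfun_apply]

lemma ramanujanSum_one (m : ℤ) : ramanujanSum 1 m = 1 := by
  unfold ramanujanSum
  rw [show ((Finset.Icc 1 1).filter (fun a => Nat.Coprime a 1)) = {1} from by decide]
  simp only [Finset.sum_singleton]
  rw [show ((m:ℝ) * ((1:ℕ):ℝ) / ((1:ℕ):ℝ)) = ((m:ℤ):ℝ) by push_cast; ring, e_int]

lemma ramanujanSum_prime (p : ℕ) (hp : p.Prime) (m : ℤ) :
    ramanujanSum p m = (if (p:ℤ) ∣ m then (p:ℂ) else 0) - 1 := by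
  have h := sum_divisors_ramanujanSum' p hp.pos m
  rw [hp.divisors, Finset.sum_insert (by simp [Ne.symm hp.ne_one]), ramanujanSum_one,
    Finset.sum_singleton] at h
  linear_combination h

noncomputable def Wfun : ArithmeticFunction ℂ :=
  ⟨fun d => ((μ d : ℂ)) ^ 2 / ((Nat.totient d : ℂ)) ^ 2, by simp⟩

lemma Wfun_apply (d : ℕ) : Wfun d = ((μ d : ℂ)) ^ 2 / ((Nat.totient d : ℂ)) ^ 2 := rfl

lemma Wfun_mult : Wfun.IsMultiplicative := by
  constructor
  · simp [Wfun_apply]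
  · intro a b hab
    simp only [Wfun_apply, isMultiplicative_moebius.map_mul_of_coprime hab,
      Nat.totient_mul hab]
    push_cast
    ring

theorem stmt_3 (q : ℕ) (hq : Squarefree q) (m : ℤ) (hm : m ≠ 0) :
    ∑ d ∈ q.divisors,
        ((ArithmeticFunction.moebius d : ℂ) ^ 2 / (Nat.totient d : ℂ) ^ 2) * ramanujanSum d m =
      ∏ p ∈ q.primeFactors,
        (if (p : ℤ) ∣ m then 1 + 1 / ((p : ℂ) - 1) else 1 - 1 / ((p : ℂ) - 1) ^ 2) := by
  have hC : (((μ : ArithmeticFunction ℤ) : ArithmeticFunction ℂ) * Hfun m).IsMultiplicative :=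
    isMultiplicative_moebius.intCast.mul (Hfun_mult m)
  have hG := Wfun_mult.pmul hC
  calc ∑ d ∈ q.divisors,
        ((ArithmeticFunction.moebius d : ℂ) ^ 2 / (Nat.totient d : ℂ) ^ 2) * ramanujanSum d m
      = ∑ d ∈ q.divisors,
          (Wfun.pmul (((μ : ArithmeticFunction ℤ) : ArithmeticFunction ℂ) * Hfun m)) d := by
        apply Finset.sum_congr rfl
        intro d hd
        have hd0 : 0 < d := Nat.pos_of_mem_divisors hd
        rw [pmul_apply, Wfun_apply, ramanujan_eq_mul m d hd0]
    _ = ∏ p ∈ q.primeFactors,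
          (1 + (Wfun.pmul (((μ : ArithmeticFunction ℤ) : ArithmeticFunction ℂ) * Hfun m)) p) :=
        (hG.prodPrimeFactors_one_add_of_squarefree hq).symm
    _ = ∏ p ∈ q.primeFactors,
        (if (p : ℤ) ∣ m then 1 + 1 / ((p : ℂ) - 1) else 1 - 1 / ((p : ℂ) - 1) ^ 2) := by
        apply Finset.prod_congr rfl
        intro p hp
        have hpp : p.Prime := Nat.prime_of_mem_primeFactors hp
        have hp1 : ((p:ℂ) - 1) ≠ 0 := by
          rw [sub_ne_zero]
          exact_mod_cast hpp.ne_one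
        rw [pmul_apply, Wfun_apply, ← ramanujan_eq_mul m p hpp.pos, ramanujanSum_prime p hpp m,
          ArithmeticFunction.moebius_apply_prime hpp, Nat.totient_prime hpp]
        rw [Nat.cast_sub hpp.one_lt.le]
        push_cast
        by_cases hdvd : (p:ℤ) ∣ m
        · rw [if_pos hdvd, if_pos hdvd]
          field_simp
        · rw [if_neg hdvd, if_neg hdvd]
          field_simp
          ring
end

section
/- Let f: ℝ → ℂ be a function with |f̂(ξ)| ≤ C|ξ|^{-2} for all ξ ≠ 0, such that Poisson summation holds for the function m ↦ f(m/h)e(mα). Then for h ≥ 1 and α ∈ ℝ, E_{f,h}(α) := Σ_{m ∈ ℤ} f(m/h) e(mα) satisfies E_{f,h}(α) = h·f̂(−h·ᾱ) + O_C(h^{-1}), where ᾱ is the unique representative of α mod 1 in [−1/2, 1/2). -/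
open scoped BigOperators Real FourierTransform

/-- The representative of `α` modulo `1` lying in `[-1/2, 1/2)`. -/
noncomputable def rep (α : ℝ) : ℝ := Int.fract (α + 1 / 2) - 1 / 2

theorem stmt_8 (C : ℝ) (hC : 0 < C) :
    ∃ K : ℝ, ∀ (f : ℝ → ℂ) (h : ℕ) (α : ℝ), 1 ≤ h →
      (∀ ξ : ℝ, ξ ≠ 0 → ‖𝓕 f ξ‖ ≤ C * |ξ| ^ (-2 : ℝ)) →
      (∑' m : ℤ, f ((m : ℝ) / h) * e ((m : ℝ) * α)
          = (h : ℂ) * ∑' n : ℤ, 𝓕 f ((h : ℝ) * ((n : ℝ) - α))) →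
      ‖(∑' m : ℤ, f ((m : ℝ) / h) * e ((m : ℝ) * α))
          - (h : ℂ) * 𝓕 f (-(h : ℝ) * rep α)‖ ≤ K / h := by
  have hsum0 : Summable (fun k : ℤ => ((k : ℝ) ^ 2)⁻¹) := by
    simpa [one_div] using (Real.summable_one_div_int_pow (p := 2)).2 one_lt_two
  set S : ℝ := ∑' k : ℤ, ((k : ℝ) ^ 2)⁻¹ with hS
  refine ⟨4 * C * S, ?_⟩
  intro f h α hh hF hP
  have hh0 : (0:ℝ) < h := by exact_mod_cast hh.trans_lt' Nat.zero_lt_one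
  set n₀ : ℤ := ⌊α + 1/2⌋ with hn₀
  have hrep : rep α = α - n₀ := by
    simp only [rep, Int.fract, hn₀]; ring
  have hrep_abs : |rep α| ≤ 1/2 := by
    have h1 := Int.fract_nonneg (α + 1/2)
    have h2 := Int.fract_lt_one (α + 1/2)
    rw [abs_le]; constructor <;> simp only [rep] <;> linarith
  set g : ℤ → ℂ := fun n => 𝓕 f ((h:ℝ) * ((n:ℝ) - α)) with hg_def
  set b : ℤ → ℝ := fun n => 4*C/(h:ℝ)^2 * (((n:ℝ) - (n₀:ℝ))^2)⁻¹ with hb_def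
  have hb_sum : Summable b := by
    have := ((Equiv.subRight n₀).summable_iff).2 (hsum0.mul_left (4*C/(h:ℝ)^2))
    refine this.congr fun n => ?_
    simp only [Function.comp, Equiv.subRight_apply, hb_def]
    push_cast; ring
  have hbound : ∀ n : ℤ, ‖(if n = n₀ then 0 else g n : ℂ)‖ ≤ b n := by
    intro n
    by_cases hn : n = n₀
    · subst hn; simp [hb_def]
    · rw [if_neg hn]
      have h1 : (1:ℝ) ≤ |(n:ℝ) - (n₀:ℝ)| := by
        have : (1:ℤ) ≤ |n - n₀| := Int.one_le_abs (sub_ne_zero.2 hn)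
        have h2 : ((1:ℤ):ℝ) ≤ ((|n - n₀| : ℤ) : ℝ) := by exact_mod_cast this
        rw [Int.cast_abs] at h2
        push_cast at h2 ⊢
        linarith
      have e1 : (n:ℝ) - α = ((n:ℝ) - (n₀:ℝ)) - rep α := by rw [hrep]; ring
      have h2 : |(n:ℝ) - (n₀:ℝ)|/2 ≤ |(n:ℝ) - α| := by
        have h3 := abs_sub_abs_le_abs_sub ((n:ℝ) - (n₀:ℝ)) (rep α)
        rw [← e1] at h3
        linarith
      have hna : ((n:ℝ) - α) ≠ 0 := by
        intro h0
        rw [h0, abs_zero] at h2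
        linarith
      have hξ : (h:ℝ) * ((n:ℝ) - α) ≠ 0 := mul_ne_zero hh0.ne' hna
      have hnn : ((n:ℝ) - (n₀:ℝ)) ≠ 0 := by
        intro h0; rw [h0, abs_zero] at h1; linarith
      calc ‖g n‖ ≤ C * |(h:ℝ) * ((n:ℝ) - α)| ^ (-2:ℝ) := hF _ hξ
        _ = C * ((|(h:ℝ) * ((n:ℝ) - α)|)^2)⁻¹ := by
            rw [Real.rpow_neg (abs_nonneg _)]; norm_num [Real.rpow_two]
        _ = C * ((h:ℝ)^2 * (((n:ℝ) - α))^2)⁻¹ := by rw [sq_abs]; ring_nf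
        _ ≤ C * ((h:ℝ)^2 * (((n:ℝ) - (n₀:ℝ))^2/4))⁻¹ := by
            have hlt : 0 < (h:ℝ)^2 * (((n:ℝ) - (n₀:ℝ))^2/4) := by positivity
            have hge : (h:ℝ)^2 * (((n:ℝ) - (n₀:ℝ))^2/4) ≤ (h:ℝ)^2 * ((n:ℝ) - α)^2 := by
              have hsq : ((n:ℝ) - (n₀:ℝ))^2/4 ≤ ((n:ℝ) - α)^2 := by
                nlinarith [sq_abs ((n:ℝ) - α), sq_abs ((n:ℝ) - (n₀:ℝ)),
                  abs_nonneg ((n:ℝ) - α), abs_nonneg ((n:ℝ) - (n₀:ℝ))]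
              nlinarith [sq_nonneg (h:ℝ)]
            exact mul_le_mul_of_nonneg_left (inv_anti₀ hlt hge) hC.le
        _ = b n := by
            simp only [hb_def]
            field_simp
  have hite : Summable (fun n : ℤ => if n = n₀ then 0 else g n) :=
    Summable.of_norm_bounded hb_sum hbound
  have hsingle : Summable (fun n : ℤ => if n = n₀ then g n₀ else 0) := by
    refine summable_of_ne_finset_zero (s := {n₀}) fun n hn => ?_
    simp only [Finset.mem_singleton] at hn
    rw [if_neg hn]
  have hg : Summable g := by
    refine (hite.add hsingle).congr fun n => ?_
    by_cases hn : n = n₀ <;> simp [hn]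
  have hnorm_sum : Summable (fun n : ℤ => ‖(if n = n₀ then 0 else g n : ℂ)‖) :=
    Summable.of_nonneg_of_le (fun n => norm_nonneg _) hbound hb_sum
  have hmain : 𝓕 f (-(h:ℝ) * rep α) = g n₀ := by
    simp only [hg_def]
    congr 1
    rw [hrep]; ring
  rw [hP, hmain]
  have key : (h:ℂ) * (∑' n : ℤ, g n) - (h:ℂ) * g n₀
      = (h:ℂ) * ∑' n : ℤ, (if n = n₀ then 0 else g n) := by
    rw [Summable.tsum_eq_add_tsum_ite hg n₀]; ring
  rw [key]
  have htsum_b : ∑' n : ℤ, b n = 4*C/(h:ℝ)^2 * S := by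
    calc ∑' n : ℤ, b n
        = ∑' n : ℤ, (fun k : ℤ => 4*C/(h:ℝ)^2 * ((k:ℝ)^2)⁻¹) ((Equiv.subRight n₀) n) := by
          refine tsum_congr fun n => ?_
          simp only [hb_def, Equiv.subRight_apply]
          push_cast; ring
      _ = ∑' k : ℤ, 4*C/(h:ℝ)^2 * ((k:ℝ)^2)⁻¹ := (Equiv.subRight n₀).tsum_eq (fun k : ℤ => 4*C/(h:ℝ)^2 * ((k:ℝ)^2)⁻¹)
      _ = 4*C/(h:ℝ)^2 * S := tsum_mul_left
  have hle : ‖∑' n : ℤ, (if n = n₀ then 0 else g n : ℂ)‖ ≤ 4*C/(h:ℝ)^2 * S := by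
    calc ‖∑' n : ℤ, (if n = n₀ then 0 else g n : ℂ)‖
        ≤ ∑' n : ℤ, ‖(if n = n₀ then 0 else g n : ℂ)‖ := norm_tsum_le_tsum_norm hnorm_sum
      _ ≤ ∑' n : ℤ, b n := Summable.tsum_le_tsum hbound hnorm_sum hb_sum
      _ = 4*C/(h:ℝ)^2 * S := htsum_b
  calc ‖(h:ℂ) * ∑' n : ℤ, (if n = n₀ then 0 else g n : ℂ)‖
      = (h:ℝ) * ‖∑' n : ℤ, (if n = n₀ then 0 else g n : ℂ)‖ := by
        rw [norm_mul, Complex.norm_natCast]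
    _ ≤ (h:ℝ) * (4*C/(h:ℝ)^2 * S) := by gcongr
    _ = 4 * C * S / (h:ℝ) := by field_simp
end
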